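/- For every C ∈ K[x₁,…,x_{n+1}], the n-ary bracket {f₁,…,fₙ} := J(f₁,…,fₙ,C) on K[x₁,…,x_{n+1}] satisfies the n-Lie (Filippov) Jacobi identity: for all u₁,…,uₙ, v₁,…,v_{n−1} ∈ K[x₁,…,x_{n+1}], J(J(u₁,…,uₙ,C), v₁,…,v_{n−1}, C) = Σ_{i=1}^{n} J(u₁,…,u_{i−1}, J(u_i, v₁,…,v_{n−1}, C), u_{i+1},…,uₙ, C). Hence P_C is an n-Lie-Poisson algebra. -/

import Mathlib

open MvPolynomial

section AuxLemmas
open Finset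

variable {R : Type*} [CommRing R] {σ : Type*} {ι : Type*} [DecidableEq ι]

lemma pderiv_prod (k : σ) (s : Finset ι) (f : ι → MvPolynomial σ R) :
    pderiv k (∏ i ∈ s, f i) = ∑ i ∈ s, pderiv k (f i) * ∏ j ∈ s.erase i, f j := by
  induction s using Finset.induction_on with
  | empty => simp
  | @insert a s ha ih =>
    rw [Finset.prod_insert ha, pderiv_mul, ih, Finset.sum_insert ha, Finset.erase_insert ha,
      Finset.mul_sum]
    congr 1
    refine Finset.sum_congr rfl fun i hi => ?_
    rw [Finset.erase_insert_of_ne (by rintro rfl; exact ha hi)]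
    rw [Finset.prod_insert (fun h => ha (Finset.mem_of_mem_erase h))]
    ring

lemma pd_comm (i j : σ) (p : MvPolynomial σ R) :
    pderiv i (pderiv j p) = pderiv j (pderiv i p) := by
  classical
  rcases eq_or_ne i j with rfl | hij
  · rfl
  induction p using MvPolynomial.induction_on' with
  | monomial s a =>
    simp only [pderiv_monomial]
    rw [tsub_tsub, tsub_tsub, add_comm]
    congr 1
    · rw [Finsupp.tsub_apply, Finsupp.tsub_apply, Finsupp.single_apply, Finsupp.single_apply,
        if_neg hij, if_neg (Ne.symm hij)]
      simp only [tsub_zero]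
      ring
  | add p q hp hq => simp [hp, hq]

variable {n : Type*} [Fintype n] [DecidableEq n]

lemma pderiv_det (k : σ) (M : Matrix n n (MvPolynomial σ R)) :
    pderiv k M.det = ∑ r, (M.updateRow r fun j => pderiv k (M r j)).det := by
  classical
  simp only [Matrix.det_apply']
  rw [map_sum]
  rw [Finset.sum_comm]
  refine Finset.sum_congr rfl fun σ' _ => ?_
  have hc : pderiv k ((Equiv.Perm.sign σ' : ℤ) : MvPolynomial σ R) = 0 := by
    rw [show ((Equiv.Perm.sign σ' : ℤ) : MvPolynomial σ R) = C ((Equiv.Perm.sign σ' : ℤ) : R) by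
      push_cast [map_intCast]; rfl]
    exact pderiv_C
  rw [pderiv_mul, hc, zero_mul, zero_add, pderiv_prod, Finset.mul_sum]
  rw [← Equiv.sum_comp σ' (fun r => (Equiv.Perm.sign σ' : ℤ) *
      ∏ i, (M.updateRow r fun j => pderiv k (M r j)) (σ' i) i)]
  refine Finset.sum_congr rfl fun t _ => ?_
  congr 1
  rw [← Finset.mul_prod_erase Finset.univ _ (Finset.mem_univ t)]
  rw [Matrix.updateRow_apply, if_pos rfl]
  congr 1
  refine Finset.prod_congr rfl fun i hi => ?_
  rw [Matrix.updateRow_apply, if_neg]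
  exact fun h => (Finset.mem_erase.mp hi).1 (σ'.injective h)

lemma det_updateRow_finset_sum {R' : Type*} [CommRing R'] (M : Matrix n n R') (i : n)
    {ι' : Type*} (s : Finset ι') (w : ι' → n → R') :
    (M.updateRow i (∑ l ∈ s, w l)).det = ∑ l ∈ s, (M.updateRow i (w l)).det := by
  classical
  induction s using Finset.induction_on with
  | empty =>
    simp only [Finset.sum_empty]
    exact Matrix.det_eq_zero_of_row_eq_zero i (by simp)
  | @insert a s ha ih =>
    rw [Finset.sum_insert ha, Finset.sum_insert ha, Matrix.det_updateRow_add, ih]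

lemma cofactor_expansion {R' : Type*} [CommRing R'] (M : Matrix n n R') (k : n) (r : n → R') :
    ∑ i, M i k * (M.updateRow i r).det = r k * M.det := by
  classical
  have hr : ∀ i : n, (M.updateRow i r).det = ∑ l, r l * M.adjugate l i := by
    intro i
    have : r = ∑ l, (fun j => r l * (Pi.single l 1 : n → R') j) := by
      ext j
      simp [Pi.single_apply, eq_comm]
    conv_lhs => rw [this]
    rw [det_updateRow_finset_sum]
    refine Finset.sum_congr rfl fun l _ => ?_
    rw [Matrix.adjugate_apply, show (fun j => r l * (Pi.single l 1 : n → R') j) =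
      r l • (Pi.single l 1 : n → R') from rfl, Matrix.det_updateRow_smul]
  calc ∑ i, M i k * (M.updateRow i r).det
      = ∑ l, r l * ∑ i, M.adjugate l i * M i k := by
        simp only [hr, Finset.mul_sum, Finset.sum_mul]
        rw [Finset.sum_comm]
        exact Finset.sum_congr rfl fun l _ => Finset.sum_congr rfl fun i _ => by ring
    _ = r k * M.det := by
        have := Matrix.adjugate_mul M
        have h2 : ∀ l, ∑ i, M.adjugate l i * M i k = (M.det • (1 : Matrix n n R')) l k := by
          intro l; rw [← this, Matrix.mul_apply]
        simp only [h2, Matrix.smul_apply, Matrix.one_apply, smul_eq_mul, mul_ite, mul_one, mul_zero]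
        simp [Finset.sum_ite_eq', eq_comm, mul_comm]

lemma key_identity (a f : n → MvPolynomial n R) :
    ∑ i, ((Matrix.of fun i' j => pderiv j (f i')).updateRow i
        (fun j => pderiv j (∑ k, a k * pderiv k (f i)))).det
      = ∑ k, a k * pderiv k (Matrix.of fun i j => pderiv j (f i)).det
        + (∑ k, pderiv k (a k)) * (Matrix.of fun i j => pderiv j (f i)).det := by
  classical
  set M : Matrix n n (MvPolynomial n R) := Matrix.of fun i j => pderiv j (f i) with hM
  have hMij : ∀ i j, M i j = pderiv j (f i) := fun i j => rfl
  have hrow : ∀ i, (fun j => pderiv j (∑ k, a k * pderiv k (f i)))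
      = (∑ k, M i k • (fun j => pderiv j (a k)))
        + (∑ k, a k • (fun j => pderiv k (M i j))) := by
    intro i; funext j
    simp only [map_sum, pderiv_mul, Pi.add_apply, Finset.sum_apply, Pi.smul_apply, smul_eq_mul]
    rw [← Finset.sum_add_distrib]
    refine Finset.sum_congr rfl fun k _ => ?_
    rw [hMij, hMij, pd_comm j k]
    ring
  have hsplit : ∀ i, ((M.updateRow i
        (fun j => pderiv j (∑ k, a k * pderiv k (f i))))).det
      = (∑ k, M i k * (M.updateRow i (fun j => pderiv j (a k))).det)
        + (∑ k, a k * (M.updateRow i (fun j => pderiv k (M i j))).det) := by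
    intro i
    rw [hrow i, Matrix.det_updateRow_add, det_updateRow_finset_sum, det_updateRow_finset_sum]
    congr 1
    · exact Finset.sum_congr rfl fun k _ => Matrix.det_updateRow_smul M i (M i k) _
    · exact Finset.sum_congr rfl fun k _ => Matrix.det_updateRow_smul M i (a k) _
  simp only [hsplit]
  rw [Finset.sum_add_distrib, add_comm]
  congr 1
  · -- second derivative part gives X (det M)
    rw [Finset.sum_comm]
    refine Finset.sum_congr rfl fun k _ => ?_
    rw [← Finset.mul_sum, pderiv_det k M]
  · -- gradient-of-coefficients part gives divergence term
    rw [Finset.sum_comm, Finset.sum_mul]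
    refine Finset.sum_congr rfl fun k _ => ?_
    exact cofactor_expansion M k _

lemma div_cofactor_zero {K : Type*} [Field K] [CharZero K] {N : ℕ}
    (g : Fin (N + 1) → MvPolynomial (Fin (N + 1)) K) :
    ∑ k, pderiv k (((Matrix.of fun i j => pderiv j (g i)).updateRow 0
      (Pi.single k 1)).det) = 0 := by
  classical
  set G : Matrix (Fin (N+1)) (Fin (N+1)) (MvPolynomial (Fin (N+1)) K) :=
    Matrix.of fun i j => pderiv j (g i) with hG
  have expand : ∀ k, pderiv k ((G.updateRow 0 (Pi.single k 1)).det)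
      = ∑ i, ((G.updateRow 0 (Pi.single k 1)).updateRow i
          (fun j => pderiv k ((G.updateRow 0 (Pi.single k 1)) i j))).det :=
    fun k => pderiv_det k _
  simp only [expand]
  rw [Finset.sum_comm]
  refine Finset.sum_eq_zero fun i _ => ?_
  rcases eq_or_ne i 0 with rfl | hi
  · refine Finset.sum_eq_zero fun k _ => ?_
    refine Matrix.det_eq_zero_of_row_eq_zero 0 fun j => ?_
    rw [Matrix.updateRow_self, Matrix.updateRow_self]
    rcases eq_or_ne j k with rfl | hjk
    · rw [Pi.single_eq_same]; exact pderiv_one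
    · rw [Pi.single_eq_of_ne hjk]; exact map_zero _
  · -- rows other than 0 are gradients; use symmetry of second derivatives
    set D : Fin (N+1) → Fin (N+1) → MvPolynomial (Fin (N+1)) K :=
      fun k l => ((G.updateRow 0 (Pi.single k 1)).updateRow i (Pi.single l 1)).det with hD
    have hanti : ∀ k l, D l k = - D k l := by
      intro k l
      have hswap : (G.updateRow 0 (Pi.single l 1)).updateRow i (Pi.single k 1)
          = ((G.updateRow 0 (Pi.single k 1)).updateRow i (Pi.single l 1)).submatrix
              (Equiv.swap 0 i) id := by
        refine Matrix.ext fun r j => ?_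
        simp only [Matrix.submatrix_apply, Matrix.updateRow_apply, Equiv.swap_apply_def, id_eq]
        split_ifs <;> simp_all
      rw [hD]
      dsimp only
      rw [hswap, Matrix.det_permute, Equiv.Perm.sign_swap (Ne.symm hi)]
      simp
    have hterm : ∀ k, ((G.updateRow 0 (Pi.single k 1)).updateRow i
          (fun j => pderiv k ((G.updateRow 0 (Pi.single k 1)) i j))).det
        = ∑ l, pderiv k (pderiv l (g i)) * D k l := by
      intro k
      have hrow : (fun j => pderiv k ((G.updateRow 0 (Pi.single k 1)) i j))
          = ∑ l, (fun l' => (Pi.single l' (pderiv k (pderiv l' (g i))) :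
              Fin (N+1) → MvPolynomial (Fin (N+1)) K)) l := by
        funext j
        rw [Matrix.updateRow_ne hi]
        simp only [Finset.sum_apply, Pi.single_apply]
        rw [Finset.sum_ite_eq Finset.univ j]
        simp [hG]
      rw [hrow, det_updateRow_finset_sum]
      refine Finset.sum_congr rfl fun l _ => ?_
      have hsingle : (Pi.single l (pderiv k (pderiv l (g i))) :
          Fin (N+1) → MvPolynomial (Fin (N+1)) K)
          = pderiv k (pderiv l (g i)) • (Pi.single l 1 :
              Fin (N+1) → MvPolynomial (Fin (N+1)) K) := by
        funext j
        simp [Pi.single_apply, mul_ite]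
      rw [hsingle]
      exact Matrix.det_updateRow_smul _ _ _ _
    simp only [hterm]
    set S : MvPolynomial (Fin (N+1)) K := ∑ k, ∑ l, pderiv k (pderiv l (g i)) * D k l with hS
    have hSneg : S = -S := by
      conv_lhs => rw [hS, Finset.sum_comm]
      rw [show -S = ∑ k, ∑ l, -(pderiv k (pderiv l (g i)) * D k l) by
        simp [hS]]
      refine Finset.sum_congr rfl fun l _ => Finset.sum_congr rfl fun k _ => ?_
      rw [pd_comm, hanti k l]
      ring
    have h2 : (2 : K) • S = 0 := by
      rw [two_smul]
      nth_rewrite 1 [hSneg]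
      exact neg_add_cancel S
    calc S = ((2 : K)⁻¹ * 2) • S := by rw [inv_mul_cancel₀ (two_ne_zero), one_smul]
    _ = 0 := by rw [mul_smul, h2, smul_zero]

end AuxLemmas

/-- The Jacobian of `N` polynomials in `N` variables. -/
noncomputable def jac {K : Type*} [CommRing K] {N : ℕ}
    (f : Fin N → MvPolynomial (Fin N) K) : MvPolynomial (Fin N) K :=
  (Matrix.of fun i j => pderiv j (f i)).det

/-- Here `n = m + 2 ≥ 2` and the polynomial ring has `n + 1 = m + 3` variables.
For every `C`, the `n`-ary bracket `{f₁,…,fₙ} = J(f₁,…,fₙ,C)` satisfies the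
`n`-Lie (Filippov) Jacobi identity:
`{{u₁,…,uₙ},v₁,…,v_{n-1}} = Σᵢ {u₁,…,u_{i-1},{uᵢ,v₁,…,v_{n-1}},u_{i+1},…,uₙ}`. -/
theorem stmt17 {K : Type*} [Field K] [CharZero K] (m : ℕ)
    (Cp : MvPolynomial (Fin (m + 3)) K)
    (u : Fin (m + 2) → MvPolynomial (Fin (m + 3)) K)
    (v : Fin (m + 1) → MvPolynomial (Fin (m + 3)) K) :
    jac (Fin.cons (jac (Fin.snoc u Cp)) (Fin.snoc v Cp)) =
      ∑ i : Fin (m + 2),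
        jac (Fin.snoc
          (Function.update u i (jac (Fin.snoc (Fin.cons (u i) v) Cp))) Cp) := by
  classical
  set w : Fin (m + 3) → (MvPolynomial (Fin (m + 3)) K) := Fin.snoc u Cp with hw
  set G : Matrix (Fin (m + 3)) (Fin (m + 3)) (MvPolynomial (Fin (m + 3)) K) :=
    Matrix.of fun i j => pderiv j ((Fin.cons 0 (Fin.snoc v Cp) : Fin (m + 3) → MvPolynomial (Fin (m + 3)) K) i) with hGdef
  set a : Fin (m + 3) → MvPolynomial (Fin (m + 3)) K := fun k => (G.updateRow 0 (Pi.single k 1)).det with ha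
  -- X p = ∑ k, a k * ∂ₖ p
  have hX : ∀ p : MvPolynomial (Fin (m + 3)) K, jac (Fin.cons p (Fin.snoc v Cp)) = ∑ k, a k * pderiv k p := by
    intro p
    have hmat : (Matrix.of fun i j => pderiv j ((Fin.cons p (Fin.snoc v Cp) : Fin (m + 3) → MvPolynomial (Fin (m + 3)) K) i))
        = G.updateRow 0 (fun j => pderiv j p) := by
      refine Matrix.ext fun i j => ?_
      refine Fin.cases ?_ (fun i' => ?_) i
      · rw [Matrix.of_apply, Fin.cons_zero, Matrix.updateRow_self]
      · rw [Matrix.of_apply, Fin.cons_succ, Matrix.updateRow_ne (Fin.succ_ne_zero i'), hGdef,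
          Matrix.of_apply, Fin.cons_succ]
    rw [jac, hmat]
    have hrow : (fun j => pderiv j p)
        = ∑ k, (fun k' => (Pi.single k' (pderiv k' p) : Fin (m + 3) → MvPolynomial (Fin (m + 3)) K)) k := by
      funext j
      simp only [Finset.sum_apply, Pi.single_apply]
      rw [Finset.sum_ite_eq Finset.univ j]
      simp
    rw [hrow, det_updateRow_finset_sum]
    refine Finset.sum_congr rfl fun k _ => ?_
    have hsingle : (Pi.single k (pderiv k p) : Fin (m + 3) → MvPolynomial (Fin (m + 3)) K)
        = pderiv k p • (Pi.single k 1 : Fin (m + 3) → MvPolynomial (Fin (m + 3)) K) := by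
      funext j
      simp [Pi.single_apply, mul_ite]
    rw [hsingle, Matrix.det_updateRow_smul]
    exact mul_comm _ _
  have hdiv : ∑ k, pderiv k (a k) = 0 :=
    div_cofactor_zero (N := m + 2) (Fin.cons 0 (Fin.snoc v Cp))
  have hkey := key_identity a w
  rw [hdiv, zero_mul, add_zero] at hkey
  -- LHS equals the full sum over Fin (m+3)
  have hL : jac (Fin.cons (jac w) (Fin.snoc v Cp))
      = ∑ i, ((Matrix.of fun i' j => pderiv j (w i')).updateRow i
          (fun j => pderiv j (∑ k, a k * pderiv k (w i)))).det := by
    rw [hX (jac w), hkey]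
    rfl
  rw [hL, Fin.sum_univ_castSucc]
  -- the last summand vanishes
  have hC0 : jac (Fin.cons Cp (Fin.snoc v Cp)) = 0 := by
    rw [jac]
    refine Matrix.det_zero_of_row_eq (i := 0) (j := Fin.last (m + 2)) Fin.last_pos.ne ?_
    funext j
    rw [Matrix.of_apply, Matrix.of_apply, Fin.cons_zero, ← Fin.succ_last, Fin.cons_succ,
      Fin.snoc_last]
  have hlast : ((Matrix.of fun i' j => pderiv j (w i')).updateRow (Fin.last (m + 2))
      (fun j => pderiv j (∑ k, a k * pderiv k (w (Fin.last (m + 2)))))).det = 0 := by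
    refine Matrix.det_eq_zero_of_row_eq_zero (Fin.last (m + 2)) fun j => ?_
    rw [Matrix.updateRow_self]
    have : ∑ k, a k * pderiv k (w (Fin.last (m + 2))) = 0 := by
      rw [show w (Fin.last (m + 2)) = Cp by rw [hw]; exact Fin.snoc_last _ _, ← hX Cp, hC0]
    rw [this, map_zero]
  rw [hlast, add_zero]
  -- identify the castSucc summands with the RHS brackets
  refine Finset.sum_congr rfl fun i _ => ?_
  have hq : jac (Fin.snoc (Fin.cons (u i) v) Cp) = ∑ k, a k * pderiv k (w i.castSucc) := by
    rw [← Fin.cons_snoc_eq_snoc_cons, hX, hw]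
    simp
  rw [jac, hq]
  congr 1
  refine Matrix.ext fun i' j => ?_
  refine Fin.lastCases ?_ (fun i'' => ?_) i'
  · rw [Matrix.of_apply, Fin.snoc_last, Matrix.updateRow_ne (Fin.castSucc_lt_last i).ne',
      Matrix.of_apply, hw, Fin.snoc_last]
  · rcases eq_or_ne i'' i with rfl | hne
    · rw [Matrix.of_apply, Fin.snoc_castSucc, Function.update_self, Matrix.updateRow_self]
    · rw [Matrix.of_apply, Fin.snoc_castSucc, Function.update_of_ne hne,
        Matrix.updateRow_ne (fun h => hne (Fin.castSucc_injective _ h)),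
        Matrix.of_apply, hw, Fin.snoc_castSucc]
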